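/- Let q ∈ k be a primitive n-th root of unity with n > 1. Then S_m(q) = Σ_{σ ∈ S_m} q^{τ(σ)} = 0 whenever m ≥ n, and S_m(q) ≠ 0 whenever 0 < m < n. -/

import Mathlib

/-- The number of inversions `τ(σ)` of a permutation. -/
def invCount {m : ℕ} (σ : Equiv.Perm (Fin m)) : ℕ :=
  (Finset.univ.filter fun p : Fin m × Fin m => p.1 < p.2 ∧ σ p.2 < σ p.1).card

/-- `S_m(q) = Σ_{σ ∈ S_m} q^{τ(σ)}`. -/
def Spoly (k : Type*) [Field k] (q : k) (m : ℕ) : k :=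
  ∑ σ : Equiv.Perm (Fin m), q ^ invCount σ

open Finset Equiv

/-- Insert value `v` at the last position: the underlying function. -/
def permFun {m : ℕ} (v : Fin (m+1)) (π : Perm (Fin m)) : Fin (m+1) → Fin (m+1) :=
  Fin.snoc (fun i => v.succAbove (π i)) v

lemma permFun_injective {m : ℕ} (v : Fin (m+1)) (π : Perm (Fin m)) :
    Function.Injective (permFun v π) := by
  intro a b hab
  induction a using Fin.lastCases with
  | last =>
    induction b using Fin.lastCases with
    | last => rfl
    | cast b =>
      simp only [permFun, Fin.snoc_last, Fin.snoc_castSucc] at hab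
      exact absurd hab.symm (Fin.succAbove_ne v (π b))
  | cast a =>
    induction b using Fin.lastCases with
    | last =>
      simp only [permFun, Fin.snoc_last, Fin.snoc_castSucc] at hab
      exact absurd hab (Fin.succAbove_ne v (π a))
    | cast b =>
      simp only [permFun, Fin.snoc_castSucc] at hab
      have := π.injective (v.succAbove_right_injective hab)
      exact congrArg Fin.castSucc this

/-- Insert value `v` at the last position, as a permutation. -/
noncomputable def permF {m : ℕ} (v : Fin (m+1)) (π : Perm (Fin m)) : Perm (Fin (m+1)) :=
  Equiv.ofBijective _ ((Finite.injective_iff_bijective).mp (permFun_injective v π))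

@[simp] lemma permF_apply_castSucc {m : ℕ} (v : Fin (m+1)) (π : Perm (Fin m)) (i : Fin m) :
    permF v π (Fin.castSucc i) = v.succAbove (π i) := by
  show permFun v π (Fin.castSucc i) = _
  simp [permFun]

@[simp] lemma permF_apply_last {m : ℕ} (v : Fin (m+1)) (π : Perm (Fin m)) :
    permF v π (Fin.last m) = v := by
  show permFun v π (Fin.last m) = _
  simp [permFun]

lemma card_le_filter {m : ℕ} (v : Fin (m+1)) :
    (Finset.univ.filter fun x : Fin m => v ≤ Fin.castSucc x).card = m - v := by
  have h : (Finset.univ.filter fun x : Fin m => v ≤ Fin.castSucc x).card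
      = ((Finset.range m).filter fun x => (v : ℕ) ≤ x).card := by
    refine Finset.card_bij (fun x _ => (x : ℕ)) ?_ ?_ ?_
    · intro x hx
      simp only [mem_filter, mem_univ, true_and, Fin.le_def, Fin.coe_castSucc] at hx
      simp only [mem_filter, mem_range]
      exact ⟨x.isLt, hx⟩
    · intro a _ b _ hab
      exact Fin.ext hab
    · intro b hb
      simp only [mem_filter, mem_range] at hb
      exact ⟨⟨b, hb.1⟩, by simp [Fin.le_def, hb.2], rfl⟩
  rw [h]
  have h2 : (Finset.range m).filter (fun x => (v : ℕ) ≤ x) = Finset.Ico (v : ℕ) m := by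
    ext x
    simp [Finset.mem_Ico, and_comm]
  rw [h2, Nat.card_Ico]

lemma invCount_eq_sum {l : ℕ} (σ : Perm (Fin l)) : invCount σ =
    ∑ j : Fin l, ∑ i : Fin l, if i < j ∧ σ j < σ i then 1 else 0 := by
  rw [invCount, Finset.card_filter, ← Finset.univ_product_univ, Finset.sum_product_right]

lemma invCount_permF {m : ℕ} (v : Fin (m+1)) (π : Perm (Fin m)) :
    invCount (permF v π) = invCount π + (m - v) := by
  classical
  rw [invCount_eq_sum, invCount_eq_sum]
  rw [Fin.sum_univ_castSucc]
  congr 1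
  · -- inner pairs: j = castSucc j'
    apply Finset.sum_congr rfl
    intro j _
    rw [Fin.sum_univ_castSucc]
    have hlast : ¬ (Fin.last m < Fin.castSucc j) := (Fin.castSucc_lt_last j).asymm
    rw [if_neg (fun h => hlast h.1), add_zero]
    apply Finset.sum_congr rfl
    intro i _
    simp only [permF_apply_castSucc, Fin.castSucc_lt_castSucc_iff,
      Fin.succAbove_lt_succAbove_iff]
  · -- pairs with j = last
    rw [Fin.sum_univ_castSucc, if_neg (fun h => lt_irrefl _ h.1), add_zero]
    have : ∀ i : Fin m, (if Fin.castSucc i < Fin.last m ∧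
        permF v π (Fin.last m) < permF v π (Fin.castSucc i) then 1 else 0)
        = (if v ≤ Fin.castSucc (π i) then 1 else 0) := by
      intro i
      simp only [permF_apply_castSucc, permF_apply_last]
      congr 1
      simp only [eq_iff_iff]
      rw [Fin.lt_succAbove_iff_le_castSucc]
      exact ⟨fun h => h.2, fun h => ⟨Fin.castSucc_lt_last i, h⟩⟩
    rw [Finset.sum_congr rfl (fun i _ => this i)]
    rw [Equiv.sum_comp π (fun x => if v ≤ Fin.castSucc x then 1 else 0)]
    rw [← Finset.card_filter]
    exact card_le_filter v

lemma permF_bijective {m : ℕ} :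
    Function.Bijective (fun p : Fin (m+1) × Perm (Fin m) => permF p.1 p.2) := by
  rw [Fintype.bijective_iff_injective_and_card]
  constructor
  · rintro ⟨v, π⟩ ⟨v', π'⟩ h
    simp only at h
    have hv : v = v' := by
      have := congrArg (fun σ : Perm (Fin (m+1)) => σ (Fin.last m)) h
      simpa using this
    have hπ : π = π' := by
      ext i
      have := congrArg (fun σ : Perm (Fin (m+1)) => σ (Fin.castSucc i)) h
      simp only [permF_apply_castSucc, hv] at this
      have := v'.succAbove_right_injective this
      exact congrArg Fin.val this
    rw [hv, hπ]
  · simp [Fintype.card_perm, Nat.factorial_succ]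

lemma Spoly_succ {k : Type*} [Field k] (q : k) (m : ℕ) :
    Spoly k q (m+1) = (∑ j ∈ Finset.range (m+1), q ^ j) * Spoly k q m := by
  rw [Spoly, ← Function.Bijective.sum_comp permF_bijective (fun σ => q ^ invCount σ)]
  rw [Fintype.sum_prod_type]
  have : ∀ v : Fin (m+1), ∀ π : Perm (Fin m),
      q ^ invCount (permF v π) = q ^ (m - (v : ℕ)) * q ^ invCount π := by
    intro v π
    rw [invCount_permF, pow_add, mul_comm]
  simp_rw [this]
  rw [← Finset.sum_mul_sum]
  congr 1
  rw [Fin.sum_univ_eq_sum_range (fun v => q ^ (m - v)) (m+1)]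
  rw [← Finset.sum_range_reflect]
  apply Finset.sum_congr rfl
  intro j hj
  simp only [mem_range] at hj
  congr 1
  omega

lemma Spoly_eq_prod {k : Type*} [Field k] (q : k) (m : ℕ) :
    Spoly k q m = ∏ i ∈ Finset.range m, ∑ j ∈ Finset.range (i+1), q ^ j := by
  induction m with
  | zero =>
    simp [Spoly, invCount]
  | succ m ih =>
    rw [Spoly_succ, ih, Finset.prod_range_succ, mul_comm]

theorem stmt_4 {k : Type*} [Field k] {n : ℕ} (q : k) (hq : IsPrimitiveRoot q n)
    (hn : 1 < n) (m : ℕ) :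
    (n ≤ m → Spoly k q m = 0) ∧ (0 < m → m < n → Spoly k q m ≠ 0) := by
  constructor
  · intro hnm
    rw [Spoly_eq_prod]
    apply Finset.prod_eq_zero (i := n - 1) (Finset.mem_range.mpr (by omega))
    have : n - 1 + 1 = n := by omega
    rw [this]
    exact hq.geom_sum_eq_zero hn
  · intro hm hmn
    rw [Spoly_eq_prod]
    apply Finset.prod_ne_zero_iff.mpr
    intro i hi
    simp only [mem_range] at hi
    intro h0
    have hgeom := geom_sum_mul q (i+1)
    rw [h0, zero_mul] at hgeom
    have : q ^ (i+1) = 1 := sub_eq_zero.mp hgeom.symm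
    exact hq.pow_ne_one_of_pos_of_lt (Nat.succ_ne_zero i) (by omega) this
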